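/- Let m ≥ 2, R = k[x_1,...,x_{m+1}], F = X_1^{a_1}···X_{m+1}^{a_{m+1}}(X_1^{b_1}···X_m^{b_m} − c X_{m+1}^{b_{m+1}}) with b_1, b_2, b_{m+1} ≥ 1 and c ≠ 0. Let w = max{i ≥ 0 : a_{m+1} + 1 ≥ i b_{m+1}} and suppose a_i ≥ w b_i for i = 1,...,m. Then the element q = Σ_{i=0}^{w} c^i (x_1^{b_1}···x_m^{b_m})^i x_{m+1}^{a_{m+1}+1−i b_{m+1}} satisfies x_1^{a_1+1−w b_1} q ∈ Ann_R(F) and x_2^{a_2+1−w b_2} q ∈ Ann_R(F). -/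

import Mathlib

open scoped Classical
open MvPolynomial Finset

/-- The contraction action of `k[x_1,...,x_N]` on `k[X_1,...,X_N]`. -/
noncomputable def contract {k : Type*} [CommRing k] {σ : Type*}
    (f F : MvPolynomial σ k) : MvPolynomial σ k :=
  ∑ a ∈ f.support, ∑ b ∈ F.support,
    if a ≤ b then MvPolynomial.monomial (b - a) (MvPolynomial.coeff a f * MvPolynomial.coeff b F)
    else 0

section
variable {k : Type*} [CommRing k] {σ : Type*}
lemma contract_eq_sum (f F : MvPolynomial σ k) :
    contract f F = (AddMonoidAlgebra.coeff f).sum fun u x => (AddMonoidAlgebra.coeff F).sum fun v y =>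
      if u ≤ v then MvPolynomial.monomial (v - u) (x * y) else 0 := rfl
lemma contract_zero_left (F : MvPolynomial σ k) : contract 0 F = 0 := by
  simp [contract]
lemma contract_add_left (f g F : MvPolynomial σ k) :
    contract (f + g) F = contract f F + contract g F := by
  simp only [contract_eq_sum]
  rw [AddMonoidAlgebra.coeff_add, Finsupp.sum_add_index']
  · intro u; simp
  · intro u x1 x2
    rw [← Finsupp.sum_add]
    congr 1; ext v y
    split_ifs with h
    · rw [add_mul, map_add]
    · simp
lemma contract_add_right (f F G : MvPolynomial σ k) :
    contract f (F + G) = contract f F + contract f G := by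
  simp only [contract_eq_sum]
  rw [← Finsupp.sum_add]
  congr 1; funext u x
  rw [AddMonoidAlgebra.coeff_add, Finsupp.sum_add_index']
  · intro v; simp
  · intro v y1 y2
    split_ifs with h
    · rw [mul_add, map_add]
    · simp
lemma contract_sum_left {ι : Type*} (s : Finset ι) (f : ι → MvPolynomial σ k)
    (F : MvPolynomial σ k) :
    contract (∑ i ∈ s, f i) F = ∑ i ∈ s, contract (f i) F := by
  induction s using Finset.cons_induction with
  | empty => simp [contract_zero_left]
  | cons i s hi ih => rw [Finset.sum_cons, Finset.sum_cons, contract_add_left, ih]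
lemma contract_monomial (u v : σ →₀ ℕ) (x y : k) :
    contract (MvPolynomial.monomial u x) (MvPolynomial.monomial v y) =
      if u ≤ v then MvPolynomial.monomial (v - u) (x * y) else 0 := by
  rw [contract_eq_sum]
  by_cases hx : x = 0
  · subst hx; simp
  by_cases hy : y = 0
  · subst hy; simp [Finsupp.sum]
  rw [MvPolynomial.sum_monomial_eq (by simp), MvPolynomial.sum_monomial_eq (by simp)]
end

lemma key (k : Type*) [Field k] (m : ℕ) (hm : 2 ≤ m)
    (a b : Fin (m + 1) → ℕ) (c : k) (p : Fin (m + 1)) (hp : (p : ℕ) < m)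
    (hbp : 1 ≤ b p) (hbm1 : 1 ≤ b (Fin.last m))
    (w : ℕ) (hw1 : w * b (Fin.last m) ≤ a (Fin.last m) + 1)
    (hab : ∀ i : Fin (m + 1), (i : ℕ) < m → w * b i ≤ a i) :
    contract
      ((MvPolynomial.X p : MvPolynomial (Fin (m + 1)) k) ^ (a p + 1 - w * b p) *
        ∑ i ∈ Finset.range (w + 1), MvPolynomial.C (c ^ i) *
          (∏ j ∈ (Finset.univ : Finset (Fin (m + 1))).filter
              fun j : Fin (m + 1) => (j : ℕ) < m,
            (MvPolynomial.X j : MvPolynomial (Fin (m + 1)) k) ^ b j) ^ i *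
          MvPolynomial.X (Fin.last m) ^ (a (Fin.last m) + 1 - i * b (Fin.last m)))
      ((∏ i, (MvPolynomial.X i : MvPolynomial (Fin (m + 1)) k) ^ a i) *
        ((∏ i ∈ (Finset.univ : Finset (Fin (m + 1))).filter
            fun i : Fin (m + 1) => (i : ℕ) < m, MvPolynomial.X i ^ b i) -
          MvPolynomial.C c * MvPolynomial.X (Fin.last m) ^ b (Fin.last m))) = 0 := by
  set L := Fin.last m with hLdef
  have hLval : (L : ℕ) = m := rfl
  have hpL : ¬ (p = L) := by intro h; rw [h] at hp; omega
  have hLne : ∀ j : Fin (m + 1), (j : ℕ) < m → ¬ (L = j) := by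
    intro j hj h
    rw [← h, hLval] at hj; omega
  have hLp : ¬ (L = p) := hLne p hp
  set A : Fin (m + 1) →₀ ℕ := ∑ i : Fin (m + 1), Finsupp.single i (a i) with hAdef
  set B : Fin (m + 1) →₀ ℕ :=
    ∑ j ∈ (Finset.univ : Finset (Fin (m + 1))).filter
      (fun j : Fin (m + 1) => (j : ℕ) < m), Finsupp.single j (b j) with hBdef
  have hAapp : ∀ j, A j = a j := by
    intro j
    rw [hAdef, Finset.sum_apply']
    simp [Finsupp.single_apply]
  have hBapp : ∀ j, B j = if (j : ℕ) < m then b j else 0 := by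
    intro j
    rw [hBdef, Finset.sum_apply']
    simp [Finsupp.single_apply]
  have hBL : B L = 0 := by rw [hBapp]; simp [hLval]
  set u : ℕ → (Fin (m + 1) →₀ ℕ) := fun i =>
    Finsupp.single p (a p + 1 - w * b p) + i • B +
      Finsupp.single L (a L + 1 - i * b L) with hudef
  have huapp : ∀ i j, u i j =
      (if p = j then a p + 1 - w * b p else 0) + i * B j +
        (if L = j then a L + 1 - i * b L else 0) := by
    intro i j
    rw [hudef]
    simp only [Finsupp.add_apply, Finsupp.smul_apply, smul_eq_mul, Finsupp.single_apply]
  have hup : ∀ i, u i p = a p + 1 - w * b p + i * b p := by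
    intro i
    rw [huapp, if_pos rfl, if_neg hLp, hBapp, if_pos hp]
    omega
  have huj : ∀ (i : ℕ) (j : Fin (m + 1)), (j : ℕ) < m → ¬ (p = j) → u i j = i * b j := by
    intro i j hj hpj
    rw [huapp, if_neg hpj, if_neg (hLne j hj), hBapp, if_pos hj]
    omega
  have huL : ∀ i, u i L = a L + 1 - i * b L := by
    intro i
    rw [huapp, if_neg hpL, if_pos rfl, hBL]
    omega
  have hprodB : (∏ j ∈ (Finset.univ : Finset (Fin (m + 1))).filter
      (fun j : Fin (m + 1) => (j : ℕ) < m),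
        (MvPolynomial.X j : MvPolynomial (Fin (m + 1)) k) ^ b j)
      = MvPolynomial.monomial B 1 := by
    simp only [MvPolynomial.X_pow_eq_monomial, ← MvPolynomial.monomial_sum_one]
    rfl
  have hprodA : (∏ i, (MvPolynomial.X i : MvPolynomial (Fin (m + 1)) k) ^ a i)
      = MvPolynomial.monomial A 1 := by
    simp only [MvPolynomial.X_pow_eq_monomial, ← MvPolynomial.monomial_sum_one]
    rfl
  have hf : ((MvPolynomial.X p : MvPolynomial (Fin (m + 1)) k) ^ (a p + 1 - w * b p) *
        ∑ i ∈ Finset.range (w + 1), MvPolynomial.C (c ^ i) *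
          (∏ j ∈ (Finset.univ : Finset (Fin (m + 1))).filter
              fun j : Fin (m + 1) => (j : ℕ) < m,
            (MvPolynomial.X j : MvPolynomial (Fin (m + 1)) k) ^ b j) ^ i *
          MvPolynomial.X L ^ (a L + 1 - i * b L))
      = ∑ i ∈ Finset.range (w + 1), MvPolynomial.monomial (u i) (c ^ i) := by
    rw [Finset.mul_sum]
    refine Finset.sum_congr rfl fun i _ => ?_
    rw [hprodB, MvPolynomial.X_pow_eq_monomial, MvPolynomial.X_pow_eq_monomial,
      MvPolynomial.monomial_pow, one_pow, MvPolynomial.C_mul_monomial,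
      MvPolynomial.monomial_mul, MvPolynomial.monomial_mul, hudef]
    congr 1
    · rw [← add_assoc]
    · ring
  have hF : ((∏ i, (MvPolynomial.X i : MvPolynomial (Fin (m + 1)) k) ^ a i) *
        ((∏ i ∈ (Finset.univ : Finset (Fin (m + 1))).filter
            fun i : Fin (m + 1) => (i : ℕ) < m, MvPolynomial.X i ^ b i) -
          MvPolynomial.C c * MvPolynomial.X L ^ b L))
      = MvPolynomial.monomial (A + B) 1 +
          MvPolynomial.monomial (A + Finsupp.single L (b L)) (-c) := by
    rw [hprodA, hprodB, MvPolynomial.X_pow_eq_monomial, mul_sub,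
      MvPolynomial.monomial_mul, MvPolynomial.C_mul_monomial,
      MvPolynomial.monomial_mul, sub_eq_add_neg, ← map_neg]
    rw [mul_one, one_mul, mul_one]
  rw [hf, hF, contract_sum_left]
  have step : ∀ i ∈ Finset.range (w + 1),
      contract (MvPolynomial.monomial (u i) ((c : k) ^ i))
        (MvPolynomial.monomial (A + B) 1 +
          MvPolynomial.monomial (A + Finsupp.single L (b L)) (-c)) =
      (if u i ≤ A + B then MvPolynomial.monomial (A + B - u i) ((c : k) ^ i * 1) else 0) +
      (if u i ≤ A + Finsupp.single L (b L) then
        MvPolynomial.monomial (A + Finsupp.single L (b L) - u i) ((c : k) ^ i * -c) else 0) := by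
    intro i _
    rw [contract_add_right, contract_monomial, contract_monomial]
  rw [Finset.sum_congr rfl step, Finset.sum_add_distrib]
  have hmul : ∀ i bj : ℕ, i ≤ w → i * bj ≤ w * bj := fun i bj h => Nat.mul_le_mul_right _ h
  have hS1zero : ¬ u 0 ≤ A + B := by
    intro h
    have h2 := Finsupp.le_def.mp h L
    rw [huL, Finsupp.add_apply, hAapp, hBL] at h2
    omega
  have hS2zero : ¬ u w ≤ A + Finsupp.single L (b L) := by
    intro h
    have h2 := Finsupp.le_def.mp h p
    rw [hup, Finsupp.add_apply, hAapp, Finsupp.single_apply, if_neg hLp] at h2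
    have hap := hab p hp
    omega
  rw [Finset.sum_range_succ' _ w, Finset.sum_range_succ _ w, if_neg hS1zero, if_neg hS2zero,
    add_zero, add_zero, ← Finset.sum_add_distrib]
  refine Finset.sum_eq_zero fun i hi => ?_
  rw [Finset.mem_range] at hi
  have hi1 : i + 1 ≤ w := hi
  have hLm : ¬ ((L : ℕ) < m) := by omega
  have hc1 : u (i + 1) ≤ A + B := by
    rw [Finsupp.le_def]
    intro j
    by_cases hjm : (j : ℕ) < m
    · by_cases hjp : p = j
      · rw [← hjp, hup, Finsupp.add_apply, hAapp, hBapp, if_pos hp]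
        have hap := hab p hp
        have h1 := hmul (i + 1) (b p) hi1
        have h2 := hmul w (b p) le_rfl
        omega
      · rw [huj _ j hjm hjp, Finsupp.add_apply, hAapp, hBapp, if_pos hjm]
        have haj := hab j hjm
        have h1 := hmul (i + 1) (b j) hi1
        omega
    · have hjL : j = L := Fin.ext (by have := j.isLt; rw [hLval]; omega)
      rw [hjL, huL, Finsupp.add_apply, hAapp, hBapp, if_neg hLm]
      have h1 : 1 * 1 ≤ (i + 1) * b L := Nat.mul_le_mul (by omega) hbm1
      omega
  have hc2 : u i ≤ A + Finsupp.single L (b L) := by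
    rw [Finsupp.le_def]
    intro j
    by_cases hjm : (j : ℕ) < m
    · by_cases hjp : p = j
      · rw [← hjp, hup, Finsupp.add_apply, hAapp, Finsupp.single_apply, if_neg hLp]
        have hap := hab p hp
        have h1 := hmul (i + 1) (b p) hi1
        have h2 : (i + 1) * b p = i * b p + b p := by ring
        omega
      · rw [huj _ j hjm hjp, Finsupp.add_apply, hAapp, Finsupp.single_apply,
          if_neg (hLne j hjm)]
        have haj := hab j hjm
        have h1 := hmul i (b j) (by omega)
        omega
    · have hjL : j = L := Fin.ext (by have := j.isLt; rw [hLval]; omega)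
      rw [hjL, huL, Finsupp.add_apply, hAapp, Finsupp.single_apply, if_pos rfl]
      omega
  rw [if_pos hc1, if_pos hc2]
  have hexp : A + B - u (i + 1) = A + Finsupp.single L (b L) - u i := by
    ext j
    rw [Finsupp.tsub_apply, Finsupp.tsub_apply]
    by_cases hjm : (j : ℕ) < m
    · by_cases hjp : p = j
      · rw [← hjp, hup, hup, Finsupp.add_apply, Finsupp.add_apply, hAapp, hBapp,
          if_pos hp, Finsupp.single_apply, if_neg hLp]
        have hap := hab p hp
        have h1 := hmul (i + 1) (b p) hi1
        have h2 : (i + 1) * b p = i * b p + b p := by ring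
        have h3 := hmul w (b p) le_rfl
        omega
      · rw [huj _ j hjm hjp, huj _ j hjm hjp, Finsupp.add_apply, Finsupp.add_apply,
          hAapp, hBapp, if_pos hjm, Finsupp.single_apply, if_neg (hLne j hjm)]
        have haj := hab j hjm
        have h1 := hmul (i + 1) (b j) hi1
        have h2 : (i + 1) * b j = i * b j + b j := by ring
        omega
    · have hjL : j = L := Fin.ext (by have := j.isLt; rw [hLval]; omega)
      rw [hjL, huL, huL, Finsupp.add_apply, Finsupp.add_apply, hAapp, hBapp,
        if_neg hLm, Finsupp.single_apply, if_pos rfl]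
      have h1 := hmul (i + 1) (b L) hi1
      have h2 : (i + 1) * b L = i * b L + b L := by ring
      omega
  rw [hexp, ← map_add]
  have hco : (c : k) ^ (i + 1) * 1 + c ^ i * -c = 0 := by ring
  rw [hco, map_zero]

/-- `Ann_R(F) = {f ∈ R : f ∘ F = 0}` as a set. -/
noncomputable def annSet {k : Type*} [CommRing k] {σ : Type*}
    (F : MvPolynomial σ k) : Set (MvPolynomial σ k) :=
  {f | contract f F = 0}

/-- In the proof of Prop 2.5: with `w = max{i ≥ 0 : a_{m+1} + 1 ≥ i b_{m+1}}` and
`a_i ≥ w b_i` for `i = 1,...,m`, the element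
`q = Σ_{i=0}^{w} c^i (x_1^{b_1}⋯x_m^{b_m})^i x_{m+1}^{a_{m+1}+1-i b_{m+1}}` satisfies
`x_1^{a_1+1-w b_1} q ∈ Ann_R(F)` and `x_2^{a_2+1-w b_2} q ∈ Ann_R(F)`.
(Indices `0, 1` play the roles of `1, 2`; `Fin.last m` plays the role of `m+1`.) -/
theorem stmt18 (k : Type*) [Field k] (m : ℕ) (hm : 2 ≤ m)
    (a b : Fin (m + 1) → ℕ) (c : k) (hc : c ≠ 0)
    (hb1 : 1 ≤ b ⟨0, by omega⟩) (hb2 : 1 ≤ b ⟨1, by omega⟩) (hbm1 : 1 ≤ b (Fin.last m))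
    (w : ℕ) (hw1 : w * b (Fin.last m) ≤ a (Fin.last m) + 1)
    (hw2 : ∀ i, i * b (Fin.last m) ≤ a (Fin.last m) + 1 → i ≤ w)
    (hab : ∀ i : Fin (m + 1), (i : ℕ) < m → w * b i ≤ a i) :
    contract
      ((MvPolynomial.X (⟨0, by omega⟩ : Fin (m + 1)) : MvPolynomial (Fin (m + 1)) k) ^
          (a ⟨0, by omega⟩ + 1 - w * b ⟨0, by omega⟩) *
        ∑ i ∈ Finset.range (w + 1), MvPolynomial.C (c ^ i) *
          (∏ j ∈ (Finset.univ : Finset (Fin (m + 1))).filter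
              fun j : Fin (m + 1) => (j : ℕ) < m,
            (MvPolynomial.X j : MvPolynomial (Fin (m + 1)) k) ^ b j) ^ i *
          MvPolynomial.X (Fin.last m) ^ (a (Fin.last m) + 1 - i * b (Fin.last m)))
      ((∏ i, (MvPolynomial.X i : MvPolynomial (Fin (m + 1)) k) ^ a i) *
        ((∏ i ∈ (Finset.univ : Finset (Fin (m + 1))).filter
            fun i : Fin (m + 1) => (i : ℕ) < m, MvPolynomial.X i ^ b i) -
          MvPolynomial.C c * MvPolynomial.X (Fin.last m) ^ b (Fin.last m))) = 0 ∧
    contract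
      ((MvPolynomial.X (⟨1, by omega⟩ : Fin (m + 1)) : MvPolynomial (Fin (m + 1)) k) ^
          (a ⟨1, by omega⟩ + 1 - w * b ⟨1, by omega⟩) *
        ∑ i ∈ Finset.range (w + 1), MvPolynomial.C (c ^ i) *
          (∏ j ∈ (Finset.univ : Finset (Fin (m + 1))).filter
              fun j : Fin (m + 1) => (j : ℕ) < m,
            (MvPolynomial.X j : MvPolynomial (Fin (m + 1)) k) ^ b j) ^ i *
          MvPolynomial.X (Fin.last m) ^ (a (Fin.last m) + 1 - i * b (Fin.last m)))
      ((∏ i, (MvPolynomial.X i : MvPolynomial (Fin (m + 1)) k) ^ a i) *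
        ((∏ i ∈ (Finset.univ : Finset (Fin (m + 1))).filter
            fun i : Fin (m + 1) => (i : ℕ) < m, MvPolynomial.X i ^ b i) -
          MvPolynomial.C c * MvPolynomial.X (Fin.last m) ^ b (Fin.last m))) = 0 := by
  constructor
  · exact key k m hm a b c ⟨0, by omega⟩ (by simpa using by omega) hb1 hbm1 w hw1 hab
  · exact key k m hm a b c ⟨1, by omega⟩ (by simpa using by omega) hb2 hbm1 w hw1 hab
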